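/- For every graph G whose edge set is nonempty, there exists an edge e of G such that avm(G - e) < avm(G), where avm denotes the average size of a matching. -/
import Mathlib


open Finset Polynomial

namespace AvgMatching

variable {V : Type*} [Fintype V] [DecidableEq V]

/-- A matching of `G`, viewed as a finite set of edges of `G`
no two of which share a vertex. -/
def IsMatchingSet (G : SimpleGraph V) (A : Finset (Sym2 V)) : Prop :=
  ↑A ⊆ G.edgeSet ∧ (A : Set (Sym2 V)).Pairwise fun e f => ∀ v : V, v ∈ e → v ∉ f

open Classical in
/-- The finite set of all matchings of `G` (including the empty matching). -/
noncomputable def matchings (G : SimpleGraph V) : Finset (Finset (Sym2 V)) :=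
  Finset.univ.filter (IsMatchingSet G)

/-- `M(G)`: the number of matchings of `G` (including the empty one). -/
noncomputable def numM (G : SimpleGraph V) : ℕ := (matchings G).card

/-- `S(G)`: the sum of the sizes of all matchings of `G`. -/
noncomputable def totS (G : SimpleGraph V) : ℕ := ∑ A ∈ matchings G, A.card

/-- `avm(G) = S(G)/M(G)`: the average size of a matching of `G`. -/
noncomputable def avm (G : SimpleGraph V) : ℚ := (totS G : ℚ) / (numM G)

/-- `m(G,k)`: the number of matchings of size `k` in `G`. -/
noncomputable def mCount (G : SimpleGraph V) (k : ℕ) : ℕ :=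
  ((matchings G).filter fun A => A.card = k).card

/-- `μ(G)`: the matching number of `G`. -/
noncomputable def matchNum (G : SimpleGraph V) : ℕ := (matchings G).sup Finset.card

/-- Delete a vertex `u` (keeping it as an isolated vertex, which does not
affect matchings): all edges incident to `u` are removed. -/
def delVert (G : SimpleGraph V) (u : V) : SimpleGraph V :=
  G.deleteEdges {e : Sym2 V | u ∈ e}

lemma mem_matchings {G : SimpleGraph V} {A : Finset (Sym2 V)} :
    A ∈ matchings G ↔ IsMatchingSet G A := by
  classical simp [matchings]

lemma empty_mem_matchings (G : SimpleGraph V) : ∅ ∈ matchings G := by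
  simp [mem_matchings, IsMatchingSet]

lemma singleton_mem_matchings {G : SimpleGraph V} {e : Sym2 V} (he : e ∈ G.edgeSet) :
    {e} ∈ matchings G := by
  simp [mem_matchings, IsMatchingSet, he, Set.pairwise_singleton]

open Classical in
lemma subset_edgeFinset {G : SimpleGraph V} {A : Finset (Sym2 V)} (hA : A ∈ matchings G) :
    A ⊆ G.edgeFinset := by
  intro e heA
  rw [SimpleGraph.mem_edgeFinset]
  exact (mem_matchings.1 hA).1 heA

open Classical in
lemma matchings_deleteEdges (G : SimpleGraph V) (e : Sym2 V) :
    matchings (G.deleteEdges {e}) = (matchings G).filter (fun A => e ∉ A) := by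
  ext A
  simp only [mem_matchings, Finset.mem_filter, IsMatchingSet,
    SimpleGraph.edgeSet_deleteEdges, Set.subset_diff, Set.disjoint_singleton_right,
    Finset.mem_coe]
  tauto

lemma cauchy_strict {ι : Type*} (s : Finset ι) (f : ι → ℤ)
    (hne : ∃ a ∈ s, ∃ b ∈ s, f a ≠ f b) :
    (∑ a ∈ s, f a) ^ 2 < s.card * ∑ a ∈ s, (f a) ^ 2 := by
  have inner : ∀ a, ∑ b ∈ s, (f a - f b) ^ 2
      = s.card * f a ^ 2 - 2 * f a * (∑ b ∈ s, f b) + ∑ b ∈ s, f b ^ 2 := by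
    intro a
    have h1 : ∀ b, (f a - f b) ^ 2 = f a ^ 2 - 2 * f a * f b + f b ^ 2 := fun b => by ring
    simp_rw [h1]
    rw [Finset.sum_add_distrib, Finset.sum_sub_distrib, Finset.sum_const, ← Finset.mul_sum,
      nsmul_eq_mul]
  have key : ∑ a ∈ s, ∑ b ∈ s, (f a - f b) ^ 2
      = 2 * (s.card * ∑ a ∈ s, (f a) ^ 2) - 2 * (∑ a ∈ s, f a) ^ 2 := by
    simp_rw [inner]
    rw [Finset.sum_add_distrib, Finset.sum_sub_distrib, Finset.sum_const, ← Finset.mul_sum,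
      ← Finset.sum_mul, nsmul_eq_mul]
    rw [← Finset.mul_sum]
    ring
  have pos : 0 < ∑ a ∈ s, ∑ b ∈ s, (f a - f b) ^ 2 := by
    obtain ⟨a, ha, b, hb, hab⟩ := hne
    refine Finset.sum_pos' (fun i _ => Finset.sum_nonneg fun j _ => sq_nonneg _) ⟨a, ha, ?_⟩
    refine Finset.sum_pos' (fun j _ => sq_nonneg _) ⟨b, hb, ?_⟩
    exact lt_of_le_of_ne (sq_nonneg _) (Ne.symm (pow_ne_zero 2 (sub_ne_zero_of_ne hab)))
  linarith

theorem exists_edge_avm_lt (G : SimpleGraph V) (h : G.edgeSet.Nonempty) :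
    ∃ e ∈ G.edgeSet, avm (G.deleteEdges {e}) < avm G := by
  classical
  obtain ⟨e₀, he₀⟩ := h
  set 𝓜 := matchings G with h𝓜
  set M : ℕ := numM G with hM
  set S : ℕ := totS G with hS
  let E : Finset (Sym2 V) := Finset.univ.filter (· ∈ G.edgeSet)
  have hE : ∀ e, e ∈ E ↔ e ∈ G.edgeSet := fun e => by simp [E]
  have hsubE : ∀ A ∈ 𝓜, A ⊆ E := fun A hA e he => (hE e).2 ((mem_matchings.1 hA).1 he)
  set Me : Sym2 V → ℕ := fun e => (𝓜.filter fun A => e ∈ A).card with hMe_def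
  set Se : Sym2 V → ℕ := fun e => ∑ A ∈ 𝓜.filter (fun A => e ∈ A), A.card with hSe_def
  have inner_count : ∀ A ∈ 𝓜, (E.filter (· ∈ A)) = A := by
    intro A hA
    rw [Finset.filter_mem_eq_inter, Finset.inter_eq_right.2 (hsubE A hA)]
  have swapMe : ∑ e ∈ E, Me e = S := by
    simp only [hMe_def, Finset.card_filter]
    rw [Finset.sum_comm, hS]
    show _ = ∑ A ∈ 𝓜, A.card
    refine Finset.sum_congr rfl fun A hA => ?_
    rw [← Finset.sum_filter, inner_count A hA, Finset.sum_const, smul_eq_mul, mul_one]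
  have swapSe : ∑ e ∈ E, Se e = ∑ A ∈ 𝓜, A.card * A.card := by
    simp only [hSe_def, Finset.sum_filter]
    rw [Finset.sum_comm]
    refine Finset.sum_congr rfl fun A hA => ?_
    rw [← Finset.sum_filter, inner_count A hA, Finset.sum_const, smul_eq_mul]
  have key : (∑ A ∈ 𝓜, ((A.card : ℤ))) ^ 2 < 𝓜.card * ∑ A ∈ 𝓜, ((A.card : ℤ)) ^ 2 :=
    cauchy_strict 𝓜 (fun A => (A.card : ℤ))
    ⟨∅, empty_mem_matchings G, {e₀}, singleton_mem_matchings he₀, by simp⟩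
  have cS : ∑ A ∈ 𝓜, ((A.card : ℤ)) = (S : ℤ) := by
    rw [hS]
    show _ = ((∑ A ∈ matchings G, A.card : ℕ) : ℤ)
    push_cast
    rfl
  rw [cS] at key
  have hsum_pos : 0 < ∑ e ∈ E, ((Se e : ℤ) * M - (S : ℤ) * Me e) := by
    have h1 : ∑ e ∈ E, ((Se e : ℤ) * M - (S : ℤ) * Me e)
        = (M : ℤ) * ∑ A ∈ 𝓜, ((A.card : ℤ)) ^ 2 - (S : ℤ) ^ 2 := by
      rw [Finset.sum_sub_distrib, ← Finset.sum_mul, ← Finset.mul_sum]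
      have c1 : ∑ e ∈ E, (Se e : ℤ) = ∑ A ∈ 𝓜, ((A.card : ℤ)) ^ 2 := by
        rw [← Nat.cast_sum, swapSe]
        push_cast
        exact Finset.sum_congr rfl fun A _ => by ring
      have c2 : ∑ e ∈ E, (Me e : ℤ) = (S : ℤ) := by rw [← Nat.cast_sum, swapMe]
      rw [c1, c2]; ring
    have hMcard : (𝓜.card : ℤ) = (M : ℤ) := by rw [hM]; rfl
    rw [h1]
    rw [hMcard] at key
    linarith [key]
  have hex : ∃ e ∈ E, (0 : ℤ) < (Se e : ℤ) * M - (S : ℤ) * Me e := by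
    by_contra hc
    push_neg at hc
    have : ∑ e ∈ E, ((Se e : ℤ) * M - (S : ℤ) * Me e) ≤ 0 :=
      Finset.sum_nonpos fun e he => hc e he
    omega
  obtain ⟨e, heE, hge⟩ := hex
  refine ⟨e, (hE e).1 heE, ?_⟩
  have hdel := matchings_deleteEdges G e
  have hsplit : Me e + ((𝓜.filter fun A => e ∉ A)).card = M :=
    Finset.card_filter_add_card_filter_not (fun A => e ∈ A)
  have hMdel : numM (G.deleteEdges {e}) = M - Me e := by
    rw [numM, hdel, ← h𝓜]; omega
  have hSdel : totS (G.deleteEdges {e}) = S - Se e := by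
    have h2 : Se e + ∑ A ∈ 𝓜.filter (fun A => e ∉ A), A.card = S :=
      Finset.sum_filter_add_sum_filter_not 𝓜 (fun A => e ∈ A) Finset.card
    rw [totS, hdel, ← h𝓜]
    omega
  have hne : (𝓜.filter fun A => e ∉ A).Nonempty :=
    ⟨∅, Finset.mem_filter.2 ⟨empty_mem_matchings G, by simp⟩⟩
  have hMe_lt : Me e < M := by
    have := Finset.card_pos.2 hne
    omega
  have hSe_le : Se e ≤ S := by
    rw [hS]
    exact Finset.sum_le_sum_of_subset (Finset.filter_subset _ _)
  have hM_pos : 0 < M := by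
    have : (∅ : Finset (Sym2 V)) ∈ 𝓜 := empty_mem_matchings G
    rw [hM, numM, ← h𝓜]
    exact Finset.card_pos.2 ⟨∅, this⟩
  rw [avm, avm, hMdel, hSdel, ← hM, ← hS]
  rw [Nat.cast_sub hSe_le, Nat.cast_sub hMe_lt.le]
  have hq1 : (0:ℚ) < (M:ℚ) - (Me e : ℚ) := by
    have : (Me e : ℚ) < M := by exact_mod_cast hMe_lt
    linarith
  have hq2 : (0:ℚ) < (M:ℚ) := by exact_mod_cast hM_pos
  rw [div_lt_div_iff₀ hq1 hq2]
  have hcast : (S : ℚ) * (Me e) < (Se e) * M := by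
    have : (S : ℤ) * Me e < Se e * M := by linarith
    exact_mod_cast this
  nlinarith [hcast]


end AvgMatching
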